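/- In a Grothendieck topos, every locally constant object is decidable. -/

import Mathlib

/-!
Formalisation of a statement from "On the profinite fundamental group of a
connected Grothendieck topos" (Berger–Iwaniack).  A Grothendieck topos is
modelled as `Sheaf J (Type u)` for a small site `(C, J)`.
-/

open CategoryTheory CategoryTheory.Limits Opposite

universe u

instance {C : Type u} [SmallCategory C] {J : GrothendieckTopology C} {K : Type*} [Category K]
    [HasColimitsOfShape K (Type u)] (F : K ⥤ Sheaf J (Type u)) : HasColimit F :=
  (Sheaf.instHasColimitsOfShape (J := J) (K := K)).has_colimit F

instance {C : Type u} [SmallCategory C] {J : GrothendieckTopology C} :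
    HasBinaryCoproducts (Sheaf J (Type u)) :=
  Sheaf.instHasColimitsOfShape

instance {C : Type u} [SmallCategory C] {J : GrothendieckTopology C} :
    HasInitial (Sheaf J (Type u)) :=
  Sheaf.instHasColimitsOfShape

/-- A subobject `s` of `X` is complemented if it has a complement in the
subobject lattice of `X`. -/
def IsComplementedSub {C : Type u} [SmallCategory C] {J : GrothendieckTopology C}
    {X : Sheaf J (Type u)} (s : Subobject X) : Prop :=
  ∃ t : Subobject X, s ⊓ t = ⊥ ∧ s ⊔ t = ⊤

/-- An object is decidable if its diagonal, regarded as a subobject of `X ⨯ X`,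
is complemented. -/
def IsDecidableObj {C : Type u} [SmallCategory C] {J : GrothendieckTopology C}
    (X : Sheaf J (Type u)) : Prop :=
  IsComplementedSub (Subobject.mk (diag X))

/-- An object is connected if it is not initial and its only complemented
subobjects are `⊥` and `⊤`. -/
def IsConnectedObj {C : Type u} [SmallCategory C] {J : GrothendieckTopology C}
    (X : Sheaf J (Type u)) : Prop :=
  (¬ Nonempty (IsInitial X)) ∧
    ∀ s : Subobject X, IsComplementedSub s → s = ⊥ ∨ s = ⊤

/-- An object is locally connected if it is (isomorphic to) a coproduct of
connected objects. -/
def IsLocallyConnectedObj {C : Type u} [SmallCategory C] {J : GrothendieckTopology C}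
    (X : Sheaf J (Type u)) : Prop :=
  ∃ (I : Type u) (Z : I → Sheaf J (Type u)),
    (∀ i, IsConnectedObj (Z i)) ∧ Nonempty (X ≅ ∐ Z)

/-- An object is locally constant if it is trivialised, with constant fibres,
by some cover of the terminal object. -/
def IsLocallyConstantObj {C : Type u} [SmallCategory C] {J : GrothendieckTopology C}
    (X : Sheaf J (Type u)) : Prop :=
  ∃ (I : Type u) (U : I → Sheaf J (Type u)),
    Epi (terminal.from (∐ U)) ∧
    ∀ i, ∃ (S : Type u)
      (e : X ⨯ U i ≅ (constantSheaf J (Type u)).obj S ⨯ U i),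
      e.hom ≫ Limits.prod.snd = Limits.prod.snd

/-- An object is locally finite if it is trivialised, with finite constant
fibres, by some cover of the terminal object. -/
def IsLocallyFiniteObj {C : Type u} [SmallCategory C] {J : GrothendieckTopology C}
    (X : Sheaf J (Type u)) : Prop :=
  ∃ (I : Type u) (U : I → Sheaf J (Type u)),
    Epi (terminal.from (∐ U)) ∧
    ∀ i, ∃ (n : ℕ)
      (e : X ⨯ U i ≅ (constantSheaf J (Type u)).obj (ULift.{u} (Fin n)) ⨯ U i),
      e.hom ≫ Limits.prod.snd = Limits.prod.snd

/-- An object is finite if it is locally finite and a finite coproduct of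
connected objects. -/
def IsFiniteObj {C : Type u} [SmallCategory C] {J : GrothendieckTopology C}
    (X : Sheaf J (Type u)) : Prop :=
  IsLocallyFiniteObj X ∧
    ∃ (n : ℕ) (Z : Fin n → Sheaf J (Type u)),
      (∀ k, IsConnectedObj (Z k)) ∧ Nonempty (X ≅ ∐ Z)

/-- An object is a sum of finite objects if it is isomorphic to a coproduct of
finite objects. -/
def IsSumOfFiniteObj {C : Type u} [SmallCategory C] {J : GrothendieckTopology C}
    (X : Sheaf J (Type u)) : Prop :=
  ∃ (I : Type u) (Z : I → Sheaf J (Type u)),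
    (∀ i, IsFiniteObj (Z i)) ∧ Nonempty (X ≅ ∐ Z)

/-- A Galois object: a connected, globally supported object `A` such that the
canonical morphism `∐_{g ∈ Aut A} A ⟶ A ⨯ A` is an isomorphism. -/
def IsGaloisObj {C : Type u} [SmallCategory C] {J : GrothendieckTopology C}
    (A : Sheaf J (Type u)) : Prop :=
  IsConnectedObj A ∧ Epi (terminal.from A) ∧
    IsIso (Sigma.desc (f := fun _ : Aut A => A)
      (fun g => Limits.prod.lift (𝟙 A) g.hom))


/-! ### Auxiliary machinery -/

section Aux

open Opposite

variable {C : Type u} [SmallCategory C] {J : GrothendieckTopology C}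

theorem botSec_eq (Z : Sheaf J (Type u)) {d : C} (hd : (⊥ : Sieve d) ∈ J d)
    (a b : Z.val.obj (op d)) : a = b := by
  have hs : Presieve.IsSheaf J Z.val := (isSheaf_iff_isSheaf_of_type J Z.val).1 Z.cond
  have h := hs _ hd
  have hc : Presieve.FamilyOfElements.Compatible
      (fun Y g (hg : (⊥ : Sieve d).arrows g) => (False.elim hg : Z.val.obj (op Y))) := by
    intro Y₁ Y₂ W g₁ g₂ f₁ f₂ hf₁ _ _
    exact False.elim hf₁
  obtain ⟨t, _, ht⟩ := h _ hc
  rw [ht a fun Y f hf => False.elim hf, ht b fun Y f hf => False.elim hf]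

theorem botSec_nonempty (Z : Sheaf J (Type u)) {d : C} (hd : (⊥ : Sieve d) ∈ J d) :
    Nonempty (Z.val.obj (op d)) := by
  have hs : Presieve.IsSheaf J Z.val := (isSheaf_iff_isSheaf_of_type J Z.val).1 Z.cond
  have h := hs _ hd
  have hc : Presieve.FamilyOfElements.Compatible
      (fun Y g (hg : (⊥ : Sieve d).arrows g) => (False.elim hg : Z.val.obj (op Y))) := by
    intro Y₁ Y₂ W g₁ g₂ f₁ f₂ hf₁ _ _
    exact False.elim hf₁
  obtain ⟨t, _, _⟩ := h _ hc
  exact ⟨t⟩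

noncomputable def isInitialOfLocallyEmpty (W : Sheaf J (Type u))
    (h : ∀ (d : C), W.val.obj (op d) → (⊥ : Sieve d) ∈ J d) : IsInitial W := by
  apply IsInitial.ofUniqueHom (fun Z => ObjectProperty.homMk (X := W) {
    app := fun c => ↾fun w => (botSec_nonempty Z (h c.unop w)).some
    naturality := by
      intro c c' f
      ext w
      exact botSec_eq Z (h c'.unop (W.val.map f w)) _ _ })
  intro Z m
  apply ObjectProperty.hom_ext
  ext c w
  exact botSec_eq Z (h c.unop w) _ _

/-- Two sections are "apart" if any common restriction lives over a `J`-empty object. -/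
def Apart (X : Sheaf J (Type u)) {d : C} (x y : X.val.obj (op d)) : Prop :=
  ∀ ⦃e : C⦄ (k : e ⟶ d), X.val.map k.op x = X.val.map k.op y → (⊥ : Sieve e) ∈ J e

theorem Apart.res {X : Sheaf J (Type u)} {d : C} {x y : X.val.obj (op d)}
    (h : Apart X x y) {d' : C} (g : d' ⟶ d) :
    Apart X (X.val.map g.op x) (X.val.map g.op y) := by
  intro e k hk
  apply h (k ≫ g)
  simpa [FunctorToTypes.map_comp_apply] using hk

theorem apart_of_local {X : Sheaf J (Type u)} {d : C} {x y : X.val.obj (op d)}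
    {S : Sieve d} (hS : S ∈ J d)
    (h : ∀ ⦃e : C⦄ (g : e ⟶ d), S g → Apart X (X.val.map g.op x) (X.val.map g.op y)) :
    Apart X x y := by
  intro e k hk
  refine J.transitive (J.pullback_stable k hS) _ ?_
  intro Y f hf
  have : (⊥ : Sieve Y) ∈ J Y := by
    refine h (f ≫ k) hf (𝟙 Y) ?_
    simp only [op_id, FunctorToTypes.map_id_apply]
    simp only [op_comp, FunctorToTypes.map_comp_apply, hk]
  exact this

noncomputable abbrev secF (J : GrothendieckTopology C) (c : Cᵒᵖ) : Sheaf J (Type u) ⥤ Type u :=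
  sheafToPresheaf J (Type u) ⋙ (evaluation Cᵒᵖ (Type u)).obj c

noncomputable def prodPair (A B : Sheaf J (Type u)) (c : Cᵒᵖ) :
    (A ⨯ B).val.obj c ≃ A.val.obj c × B.val.obj c :=
  (PreservesLimitPair.iso (secF J c) A B ≪≫ Types.binaryProductIso _ _).toEquiv

theorem prodPair_fst (A B : Sheaf J (Type u)) (c : Cᵒᵖ) (x : (A ⨯ B).val.obj c) :
    (prodPair A B c x).1 = (prod.fst : A ⨯ B ⟶ A).hom.app c x := by
  have h1 := types_congr_hom (Types.binaryProductIso_hom_comp_fst ((secF J c).obj A) ((secF J c).obj B))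
    ((PreservesLimitPair.iso (secF J c) A B).hom x)
  have h2 := types_congr_hom (prodComparison_fst (secF J c) A B) x
  simp only [PreservesLimitPair.iso_hom] at *
  exact h1.trans h2

theorem prodPair_snd (A B : Sheaf J (Type u)) (c : Cᵒᵖ) (x : (A ⨯ B).val.obj c) :
    (prodPair A B c x).2 = (prod.snd : A ⨯ B ⟶ B).hom.app c x := by
  have h1 := types_congr_hom (Types.binaryProductIso_hom_comp_snd ((secF J c).obj A) ((secF J c).obj B))
    ((PreservesLimitPair.iso (secF J c) A B).hom x)
  have h2 := types_congr_hom (prodComparison_snd (secF J c) A B) x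
  simp only [PreservesLimitPair.iso_hom] at *
  exact h1.trans h2

/-- joint injectivity of product projections on sections -/
theorem prod_sections_ext (A B : Sheaf J (Type u)) (c : Cᵒᵖ) {x y : (A ⨯ B).val.obj c}
    (h1 : (prod.fst : A ⨯ B ⟶ A).hom.app c x = (prod.fst : A ⨯ B ⟶ A).hom.app c y)
    (h2 : (prod.snd : A ⨯ B ⟶ B).hom.app c x = (prod.snd : A ⨯ B ⟶ B).hom.app c y) :
    x = y := by
  apply (prodPair A B c).injective
  apply Prod.ext
  · rw [prodPair_fst, prodPair_fst, h1]
  · rw [prodPair_snd, prodPair_snd, h2]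

noncomputable def pairSec (A B : Sheaf J (Type u)) (c : Cᵒᵖ)
    (a : A.val.obj c) (b : B.val.obj c) : (A ⨯ B).val.obj c :=
  (prodPair A B c).symm (a, b)

@[simp] theorem pairSec_fst (A B : Sheaf J (Type u)) (c : Cᵒᵖ) (a : A.val.obj c)
    (b : B.val.obj c) : (prod.fst : A ⨯ B ⟶ A).hom.app c (pairSec A B c a b) = a := by
  have := prodPair_fst A B c (pairSec A B c a b)
  rw [pairSec, Equiv.apply_symm_apply] at this
  exact this.symm

@[simp] theorem pairSec_snd (A B : Sheaf J (Type u)) (c : Cᵒᵖ) (a : A.val.obj c)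
    (b : B.val.obj c) : (prod.snd : A ⨯ B ⟶ B).hom.app c (pairSec A B c a b) = b := by
  have := prodPair_snd A B c (pairSec A B c a b)
  rw [pairSec, Equiv.apply_symm_apply] at this
  exact this.symm

theorem pairSec_map (A B : Sheaf J (Type u)) {c c' : Cᵒᵖ} (g : c ⟶ c')
    (a : A.val.obj c) (b : B.val.obj c) :
    (A ⨯ B).val.map g (pairSec A B c a b) = pairSec A B c' (A.val.map g a) (B.val.map g b) := by
  apply prod_sections_ext
  · rw [pairSec_fst, NatTrans.naturality_apply (prod.fst : A ⨯ B ⟶ A).hom, pairSec_fst]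
  · rw [pairSec_snd, NatTrans.naturality_apply (prod.snd : A ⨯ B ⟶ B).hom, pairSec_snd]

/-- The subpresheaf of `X ⨯ X` of pairs of apart sections. -/
def apartSub (X : Sheaf J (Type u)) :
    Subfunctor (X ⨯ X : Sheaf J (Type u)).val where
  obj c := {p | Apart X (d := c.unop)
    ((prod.fst : X ⨯ X ⟶ X).hom.app c p) ((prod.snd : X ⨯ X ⟶ X).hom.app c p)}
  map := by
    intro U V i p hp
    simp only [Set.mem_preimage, Set.mem_setOf_eq] at hp ⊢
    rw [NatTrans.naturality_apply (prod.fst : X ⨯ X ⟶ X).hom,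
      NatTrans.naturality_apply (prod.snd : X ⨯ X ⟶ X).hom]
    exact hp.res i.unop

theorem apartSub_isSheaf (X : Sheaf J (Type u)) :
    Presieve.IsSheaf J (apartSub X).toFunctor := by
  have hXX : Presieve.IsSheaf J (X ⨯ X : Sheaf J (Type u)).val :=
    (isSheaf_iff_isSheaf_of_type _ _).1 (X ⨯ X : Sheaf J (Type u)).cond
  refine ((apartSub X).isSheaf_iff hXX).2 ?_
  intro U s hs
  refine apart_of_local (X := X) hs ?_
  intro e g hg
  have := hg
  simp only [Subfunctor.sieveOfSection] at this
  rw [← NatTrans.naturality_apply (prod.fst : X ⨯ X ⟶ X).hom,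
      ← NatTrans.naturality_apply (prod.snd : X ⨯ X ⟶ X).hom]
  exact this

/-- The apartness sheaf. -/
noncomputable def apartSheaf (X : Sheaf J (Type u)) : Sheaf J (Type u) :=
  ⟨(apartSub X).toFunctor, (isSheaf_iff_isSheaf_of_type _ _).2 (apartSub_isSheaf X)⟩

/-- inclusion of the apartness sheaf -/
noncomputable def apartι (X : Sheaf J (Type u)) : apartSheaf X ⟶ X ⨯ X :=
  ⟨(apartSub X).ι⟩

instance (X : Sheaf J (Type u)) : Mono (apartι X) :=
  (sheafToPresheaf J (Type u)).mono_of_mono_map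
    (by exact (inferInstance : Mono (apartSub X).ι))

theorem inf_mk_eq_bot {B A1 A2 : Sheaf J (Type u)} (f : A1 ⟶ B) (g : A2 ⟶ B) [Mono f] [Mono g]
    (H : ∀ (d : C) (a : A1.val.obj (op d)) (b : A2.val.obj (op d)),
      f.hom.app (op d) a = g.hom.app (op d) b → (⊥ : Sieve d) ∈ J d) :
    Subobject.mk f ⊓ Subobject.mk g = ⊥ := by
  rw [eq_bot_iff]
  set P := Subobject.mk f ⊓ Subobject.mk g with hP
  have h1 := Subobject.inf_arrow_factors_left (Subobject.mk f) (Subobject.mk g)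
  have h2 := Subobject.inf_arrow_factors_right (Subobject.mk f) (Subobject.mk g)
  let u : (P : Sheaf J (Type u)) ⟶ A1 :=
    Subobject.factorThru _ _ h1 ≫ (Subobject.underlyingIso f).hom
  let v : (P : Sheaf J (Type u)) ⟶ A2 :=
    Subobject.factorThru _ _ h2 ≫ (Subobject.underlyingIso g).hom
  have hu : u ≫ f = P.arrow := by
    simp [u, Subobject.underlyingIso_hom_comp_eq_mk]; rfl
  have hv : v ≫ g = P.arrow := by
    simp [v, Subobject.underlyingIso_hom_comp_eq_mk]; rfl
  have hinit : IsInitial ((P : Sheaf J (Type u))) := by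
    apply isInitialOfLocallyEmpty
    intro d w
    refine H d (u.hom.app (op d) w) (v.hom.app (op d) w) ?_
    have e1 := types_congr_hom (NatTrans.congr_app (congr_arg InducedCategory.Hom.hom hu) (op d)) w
    have e2 := types_congr_hom (NatTrans.congr_app (congr_arg InducedCategory.Hom.hom hv) (op d)) w
    simp only [ObjectProperty.FullSubcategory.comp_hom, NatTrans.comp_app, types_comp_apply] at e1 e2
    exact e1.trans e2.symm
  rw [Subobject.bot_eq_initial_to]
  exact Subobject.le_mk_of_comm (hinit.to _) (hinit.hom_ext _ _)

theorem sup_mk_eq_top {B A1 A2 : Sheaf J (Type u)} (f : A1 ⟶ B) (g : A2 ⟶ B) [Mono f] [Mono g]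
    (h : Epi (coprod.desc f g)) :
    Subobject.mk f ⊔ Subobject.mk g = ⊤ := by
  set P := Subobject.mk f ⊔ Subobject.mk g with hP
  have hf : P.Factors f := Subobject.sup_factors_of_factors_left (Subobject.mk_factors_self f)
  have hg : P.Factors g := Subobject.sup_factors_of_factors_right (Subobject.mk_factors_self g)
  have hdesc : coprod.desc f g = coprod.desc (P.factorThru f hf) (P.factorThru g hg) ≫ P.arrow := by
    apply coprod.hom_ext <;> simp
  have : Epi P.arrow := by
    rw [hdesc] at h
    exact @epi_of_epi _ _ _ _ _ _ _ h
  have : IsIso P.arrow := isIso_of_mono_of_epi _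
  exact Subobject.eq_top_of_isIso_arrow P

section ConstSheaf
variable (S : Type u)

/-- constant section of the constant sheaf -/
noncomputable def constSec (c : Cᵒᵖ) (s : S) :
    ((constantSheaf J (Type u)).obj S).val.obj c :=
  (toSheafify J ((Functor.const Cᵒᵖ).obj S)).app c s

theorem constSec_res {c c' : Cᵒᵖ} (g : c ⟶ c') (s : S) :
    ((constantSheaf J (Type u)).obj S).val.map g (constSec (J := J) S c s) =
      constSec (J := J) S c' s := by
  have := NatTrans.naturality_apply (toSheafify J ((Functor.const Cᵒᵖ).obj S)) g s
  rw [Functor.const_obj_map] at this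
  exact this.symm.trans (by rfl)

theorem constSec_locally (d : Cᵒᵖ) (z : ((constantSheaf J (Type u)).obj S).val.obj d) :
    Presheaf.imageSieve (toSheafify J ((Functor.const Cᵒᵖ).obj S)) z ∈ J d.unop :=
  Presheaf.imageSieve_mem J (toSheafify J ((Functor.const Cᵒᵖ).obj S)) z

theorem constSec_inj {d : Cᵒᵖ} {s s' : S} (hne : s ≠ s')
    (h : constSec (J := J) S d s = constSec (J := J) S d s') : (⊥ : Sieve d.unop) ∈ J d.unop := by
  have hmem := Presheaf.equalizerSieve_mem J (toSheafify J ((Functor.const Cᵒᵖ).obj S)) s s' h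
  refine J.superset_covering ?_ hmem
  intro Y f hf
  exact absurd hf hne

end ConstSheaf

/-- a global section of the terminal sheaf -/
noncomputable def termSec (c : Cᵒᵖ) : (⊤_ (Sheaf J (Type u))).val.obj c :=
  (PreservesTerminal.iso (secF J c)).inv ((Types.terminalIso : ⊤_ (Type u) ≅ PUnit).inv PUnit.unit)

section Coprod
variable {I : Type u} (V : I → Sheaf J (Type u))

/-- comparison map between presheaf and sheaf coproducts -/
noncomputable def kappa : (∐ fun i => (V i).val) ⟶ (∐ V).val :=
  Sigma.desc fun i => (Sigma.ι V i).hom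

theorem sigma_sections {e : Cᵒᵖ} (t : (∐ fun i => (V i).val).obj e) :
    ∃ (i : I) (v : (V i).val.obj e), (Sigma.ι (fun i => (V i).val) i).app e v = t := by
  obtain ⟨⟨i⟩, v, hv⟩ := Types.jointly_surjective _
    (isColimitOfPreserves ((evaluation Cᵒᵖ (Type u)).obj e)
      (colimit.isColimit (Discrete.functor fun i => (V i).val))) t
  exact ⟨i, v, hv⟩

theorem kappa_locallySurjective : Presheaf.IsLocallySurjective J (kappa V) := by
  rw [← Presheaf.isLocallySurjective_presheafToSheaf_map_iff]
  rw [Sheaf.isLocallySurjective_iff_epi']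
  let G := presheafToSheaf J (Type u)
  let μ := (sheafificationAdjunction J (Type u)).counit
  have hθ : Epi (G.map (kappa V) ≫ μ.app (∐ V)) := by
    constructor
    intro Z α β h
    apply Sigma.hom_ext
    intro i
    have hι : G.map (Sigma.ι (fun i => (V i).val) i) ≫ G.map (kappa V) ≫ μ.app (∐ V) =
        μ.app (V i) ≫ Sigma.ι V i := by
      rw [← Category.assoc, ← G.map_comp]
      have : Sigma.ι (fun i => (V i).val) i ≫ kappa V = (Sigma.ι V i).hom := by
        simp [kappa]
      rw [this]
      exact μ.naturality (Sigma.ι V i)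
    have e1 := congrArg (· ≫ α) hι
    have e2 := congrArg (· ≫ β) hι
    simp only [Category.assoc] at e1 e2
    have h' : G.map (kappa V) ≫ μ.app (∐ V) ≫ α = G.map (kappa V) ≫ μ.app (∐ V) ≫ β := by
      simpa [Category.assoc] using h
    have h1 : μ.app (V i) ≫ Sigma.ι V i ≫ α = μ.app (V i) ≫ Sigma.ι V i ≫ β := by
      rw [← e1, ← e2, h']
    exact (cancel_epi (μ.app (V i))).1 h1
  have : Epi ((G.map (kappa V) ≫ μ.app (∐ V)) ≫ inv (μ.app (∐ V))) := epi_comp _ _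
  simpa using this

end Coprod

section Triv
variable {X U : Sheaf J (Type u)} {S : Type u}
  (e : X ⨯ U ≅ (constantSheaf J (Type u)).obj S ⨯ U)

/-- the "fibre coordinate" of a section of `X` over a trivializing section of `U` -/
noncomputable def triv (c : Cᵒᵖ) (u : U.val.obj c) (x : X.val.obj c) :
    ((constantSheaf J (Type u)).obj S).val.obj c :=
  (prod.fst : (constantSheaf J (Type u)).obj S ⨯ U ⟶ _).hom.app c
    (e.hom.hom.app c (pairSec X U c x u))

theorem triv_natural {c c' : Cᵒᵖ} (g : c ⟶ c') (u : U.val.obj c) (x : X.val.obj c) :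
    ((constantSheaf J (Type u)).obj S).val.map g (triv e c u x) =
      triv e c' (U.val.map g u) (X.val.map g x) := by
  unfold triv
  rw [← NatTrans.naturality_apply (prod.fst : (constantSheaf J (Type u)).obj S ⨯ U ⟶ _).hom,
    ← NatTrans.naturality_apply e.hom.hom g, pairSec_map]

theorem triv_inj (he : e.hom ≫ Limits.prod.snd = Limits.prod.snd)
    {c : Cᵒᵖ} (u : U.val.obj c) {x y : X.val.obj c}
    (h : triv e c u x = triv e c u y) : x = y := by
  have hinj : Function.Injective (e.hom.hom.app c) := by
    intro a b hab
    have := types_congr_hom (NatTrans.congr_app (congr_arg InducedCategory.Hom.hom e.hom_inv_id) c)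
    simp only [ObjectProperty.FullSubcategory.comp_hom, NatTrans.comp_app, types_comp_apply,
      ObjectProperty.FullSubcategory.id_hom, NatTrans.id_app, types_id_apply] at this
    rw [← this a, ← this b, hab]
  have hsnd : ∀ w : X.val.obj c,
      (prod.snd : (constantSheaf J (Type u)).obj S ⨯ U ⟶ U).hom.app c
        (e.hom.hom.app c (pairSec X U c w u)) = u := by
    intro w
    have := types_congr_hom (NatTrans.congr_app (congr_arg InducedCategory.Hom.hom he) c) (pairSec X U c w u)
    simp only [ObjectProperty.FullSubcategory.comp_hom, NatTrans.comp_app, types_comp_apply] at this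
    rw [this, pairSec_snd]
  have hq : e.hom.hom.app c (pairSec X U c x u) = e.hom.hom.app c (pairSec X U c y u) := by
    apply prod_sections_ext
    · exact h
    · rw [hsnd, hsnd]
  have := hinj hq
  have hx := congr_arg ((prod.fst : X ⨯ U ⟶ X).hom.app c) this
  rwa [pairSec_fst, pairSec_fst] at hx

end Triv


/-- the locally-constant hypothesis yields a covering decomposition of `X ⨯ X`. -/
theorem desc_epi (X : Sheaf J (Type u)) (hX : IsLocallyConstantObj X) :
    Epi (coprod.desc (diag X) (apartι X)) := by
  obtain ⟨I, U, hepi, htriv⟩ := hX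
  choose S e he using htriv
  rw [← Sheaf.isLocallySurjective_iff_epi']
  constructor
  intro c p
  set x := (prod.fst : X ⨯ X ⟶ X).hom.app (op c) p with hx
  set y := (prod.snd : X ⨯ X ⟶ X).hom.app (op c) p with hy
  haveI hepi' : Sheaf.IsLocallySurjective (terminal.from (∐ U)) := by
    rw [Sheaf.isLocallySurjective_iff_epi']; exact hepi
  have h1 : Presheaf.imageSieve (terminal.from (∐ U)).hom (termSec (op c)) ∈ J c :=
    Presheaf.imageSieve_mem J _ _
  refine J.transitive h1 _ ?_
  rintro d f ⟨w, -⟩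
  haveI := kappa_locallySurjective (J := J) U
  have h2 : Presheaf.imageSieve (kappa U) w ∈ J d := Presheaf.imageSieve_mem J _ _
  refine J.transitive h2 _ ?_
  rintro d2 g ⟨t, ht⟩
  obtain ⟨i, v, rfl⟩ := sigma_sections U t
  set x1 := X.val.map g.op (X.val.map f.op x) with hx1
  set y1 := X.val.map g.op (X.val.map f.op y) with hy1
  set z := triv (e i) (op d2) v x1 with hz
  set z' := triv (e i) (op d2) v y1 with hz'
  have h3 := J.intersection_covering (constSec_locally (J := J) (S i) (op d2) z)
    (constSec_locally (J := J) (S i) (op d2) z')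
  refine J.superset_covering ?_ h3
  rintro d3 h ⟨⟨s, hs⟩, ⟨s', hs'⟩⟩
  have hs2 : constSec (J := J) (S i) (op d3) s
      = ((constantSheaf J (Type u)).obj (S i)).val.map h.op z := hs
  have hs2' : constSec (J := J) (S i) (op d3) s'
      = ((constantSheaf J (Type u)).obj (S i)).val.map h.op z' := hs'
  simp only [Sieve.pullback_apply]
  show ∃ tt, (coprod.desc (diag X) (apartι X)).hom.app (op d3) tt
      = (X ⨯ X).val.map ((h ≫ g) ≫ f).op p
  have hmapp : (X ⨯ X).val.map ((h ≫ g) ≫ f).op p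
      = (X ⨯ X).val.map h.op ((X ⨯ X).val.map g.op ((X ⨯ X).val.map f.op p)) := by
    simp [FunctorToTypes.map_comp_apply]
  have fact1 : (prod.fst : X ⨯ X ⟶ X).hom.app (op d3) ((X ⨯ X).val.map ((h ≫ g) ≫ f).op p)
      = X.val.map h.op x1 := by
    rw [hmapp, NatTrans.naturality_apply (prod.fst : X ⨯ X ⟶ X).hom,
      NatTrans.naturality_apply (prod.fst : X ⨯ X ⟶ X).hom,
      NatTrans.naturality_apply (prod.fst : X ⨯ X ⟶ X).hom]
  have fact2 : (prod.snd : X ⨯ X ⟶ X).hom.app (op d3) ((X ⨯ X).val.map ((h ≫ g) ≫ f).op p)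
      = X.val.map h.op y1 := by
    rw [hmapp, NatTrans.naturality_apply (prod.snd : X ⨯ X ⟶ X).hom,
      NatTrans.naturality_apply (prod.snd : X ⨯ X ⟶ X).hom,
      NatTrans.naturality_apply (prod.snd : X ⨯ X ⟶ X).hom]
  have hzres : ((constantSheaf J (Type u)).obj (S i)).val.map h.op z
      = triv (e i) (op d3) ((U i).val.map h.op v) (X.val.map h.op x1) := triv_natural _ _ _ _
  have hzres' : ((constantSheaf J (Type u)).obj (S i)).val.map h.op z'
      = triv (e i) (op d3) ((U i).val.map h.op v) (X.val.map h.op y1) := triv_natural _ _ _ _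
  by_cases hss : s = s'
  · -- diagonal case
    have hxy : X.val.map h.op x1 = X.val.map h.op y1 := by
      apply triv_inj (e i) (he i) ((U i).val.map h.op v)
      rw [← hzres, ← hzres', ← hs2, ← hs2', hss]
    refine ⟨(coprod.inl : X ⟶ X ⨿ apartSheaf X).hom.app (op d3) (X.val.map h.op x1), ?_⟩
    have hcomp := types_congr_hom (NatTrans.congr_app (congr_arg InducedCategory.Hom.hom
      (coprod.inl_desc (diag X) (apartι X))) (op d3)) (X.val.map h.op x1)
    simp only [ObjectProperty.FullSubcategory.comp_hom, NatTrans.comp_app, types_comp_apply] at hcomp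
    rw [hcomp]
    apply prod_sections_ext
    · rw [fact1]
      have hdf : diag X ≫ (prod.fst : X ⨯ X ⟶ X) = 𝟙 X := by simp only [diag]; exact prod.lift_fst _ _
      have := types_congr_hom (NatTrans.congr_app (congr_arg InducedCategory.Hom.hom hdf) (op d3))
        (X.val.map h.op x1)
      simp only [ObjectProperty.FullSubcategory.comp_hom, NatTrans.comp_app, types_comp_apply,
        ObjectProperty.FullSubcategory.id_hom, NatTrans.id_app, types_id_apply] at this
      exact this
    · rw [fact2, ← hxy]
      have hds : diag X ≫ (prod.snd : X ⨯ X ⟶ X) = 𝟙 X := by simp only [diag]; exact prod.lift_snd _ _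
      have := types_congr_hom (NatTrans.congr_app (congr_arg InducedCategory.Hom.hom hds) (op d3))
        (X.val.map h.op x1)
      simp only [ObjectProperty.FullSubcategory.comp_hom, NatTrans.comp_app, types_comp_apply,
        ObjectProperty.FullSubcategory.id_hom, NatTrans.id_app, types_id_apply] at this
      exact this
  · -- apart case
    have hap : Apart X (X.val.map h.op x1) (X.val.map h.op y1) := by
      intro d4 m hm
      have c1 : ((constantSheaf J (Type u)).obj (S i)).val.map m.op
          (((constantSheaf J (Type u)).obj (S i)).val.map h.op z)
          = triv (e i) (op d4) ((U i).val.map m.op ((U i).val.map h.op v))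
            (X.val.map m.op (X.val.map h.op x1)) := by
        rw [hzres]; exact triv_natural _ _ _ _
      have c2 : ((constantSheaf J (Type u)).obj (S i)).val.map m.op
          (((constantSheaf J (Type u)).obj (S i)).val.map h.op z')
          = triv (e i) (op d4) ((U i).val.map m.op ((U i).val.map h.op v))
            (X.val.map m.op (X.val.map h.op y1)) := by
        rw [hzres']; exact triv_natural _ _ _ _
      have d1 : ((constantSheaf J (Type u)).obj (S i)).val.map m.op
          (((constantSheaf J (Type u)).obj (S i)).val.map h.op z)
          = constSec (J := J) (S i) (op d4) s := by
        rw [← hs2]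
        exact constSec_res (J := J) (S i) m.op s
      have d2 : ((constantSheaf J (Type u)).obj (S i)).val.map m.op
          (((constantSheaf J (Type u)).obj (S i)).val.map h.op z')
          = constSec (J := J) (S i) (op d4) s' := by
        rw [← hs2']
        exact constSec_res (J := J) (S i) m.op s'
      have hconst : constSec (J := J) (S i) (op d4) s = constSec (J := J) (S i) (op d4) s' := by
        rw [← d1, ← d2, c1, c2, hm]
      exact constSec_inj (S i) hss hconst
    have hmem : (X ⨯ X).val.map ((h ≫ g) ≫ f).op p ∈ (apartSub X).obj (op d3) := by
      change Apart X _ _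
      rw [fact1, fact2]
      exact hap
    refine ⟨(coprod.inr : apartSheaf X ⟶ X ⨿ apartSheaf X).hom.app (op d3)
      ⟨(X ⨯ X).val.map ((h ≫ g) ≫ f).op p, hmem⟩, ?_⟩
    have hcomp := types_congr_hom (NatTrans.congr_app (congr_arg InducedCategory.Hom.hom
      (coprod.inr_desc (diag X) (apartι X))) (op d3))
      ⟨(X ⨯ X).val.map ((h ≫ g) ≫ f).op p, hmem⟩
    simp only [ObjectProperty.FullSubcategory.comp_hom, NatTrans.comp_app, types_comp_apply] at hcomp
    refine hcomp.trans ?_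
    rfl

end Aux

/-- locally constant objects of a Grothendieck topos are
decidable. -/
theorem locallyConstant_decidable
    {C : Type u} [SmallCategory C] {J : GrothendieckTopology C}
    (X : Sheaf J (Type u)) (hX : IsLocallyConstantObj X) :
    IsDecidableObj X := by
  show IsComplementedSub (Subobject.mk (diag X))
  refine ⟨Subobject.mk (apartι X), ?_, ?_⟩
  · apply inf_mk_eq_bot
    intro d a b hab
    have h1 := congr_arg ((prod.fst : X ⨯ X ⟶ X).hom.app (op d)) hab
    have h2 := congr_arg ((prod.snd : X ⨯ X ⟶ X).hom.app (op d)) hab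
    have hdf : diag X ≫ (prod.fst : X ⨯ X ⟶ X) = 𝟙 X := by simp only [diag]; exact prod.lift_fst _ _
    have hds : diag X ≫ (prod.snd : X ⨯ X ⟶ X) = 𝟙 X := by simp only [diag]; exact prod.lift_snd _ _
    have e1 := types_congr_hom (NatTrans.congr_app (congr_arg InducedCategory.Hom.hom hdf) (op d)) a
    have e2 := types_congr_hom (NatTrans.congr_app (congr_arg InducedCategory.Hom.hom hds) (op d)) a
    simp only [ObjectProperty.FullSubcategory.comp_hom, NatTrans.comp_app, types_comp_apply,
      ObjectProperty.FullSubcategory.id_hom, NatTrans.id_app, types_id_apply] at e1 e2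
    rw [e1] at h1
    rw [e2] at h2
    have hb : Apart X ((prod.fst : X ⨯ X ⟶ X).hom.app (op d) b.1)
        ((prod.snd : X ⨯ X ⟶ X).hom.app (op d) b.1) := b.2
    have := hb (𝟙 d) (by
      simp only [op_id, FunctorToTypes.map_id_apply]
      show (prod.fst : X ⨯ X ⟶ X).hom.app (op d) ((apartι X).hom.app (op d) b)
        = (prod.snd : X ⨯ X ⟶ X).hom.app (op d) ((apartι X).hom.app (op d) b)
      rw [← h1, ← h2])
    exact this
  · exact sup_mk_eq_top _ _ (desc_epi X hX)
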